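/- arXiv:2510.07495 — 8 statements merged into one kernel-verified Lean document; each statement's English description precedes it below -/
import Mathlib

section
/- For every natural number n ≥ 3, letting T = C(n,2) (the number of 2-element subsets of {1,…,n}), there exists a sequence S_1, S_2, …, S_T of 2-element subsets of {1,…,n} such that (i) every 2-element subset of {1,…,n} appears exactly once in the sequence, (ii) |S_ت ∩ S_{t+1}| = 1 for all 1 ≤ t ≤ T−1 (so the sequence is a Hamiltonian path in the Johnson graph J(n,2)), and (iii) |S_t ∩ S_{t+2}| = 1 for all 1 ≤ t ≤ T−2. -/
namespace JohnsonAux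

open Finset

/-- Adjacency-within-two predicate on a list of finsets. -/
def Adj2 : List (Finset ℕ) → Prop
  | [] => True
  | a :: l => (∀ s ∈ l.take 2, (a ∩ s).card = 1) ∧ Adj2 l

lemma adj2_cons {a : Finset ℕ} {l : List (Finset ℕ)} :
    Adj2 (a :: l) ↔ (∀ s ∈ l.take 2, (a ∩ s).card = 1) ∧ Adj2 l := Iff.rfl

lemma adj2_get (L : List (Finset ℕ)) (h : Adj2 L) :
    ∀ (i : ℕ) (hi : i < L.length), ∀ s ∈ (L.drop (i+1)).take 2, (L[i] ∩ s).card = 1 := by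
  induction L with
  | nil => intro i hi; simp at hi
  | cons a l ih =>
    intro i hi s hs
    rcases h with ⟨h1, h2⟩
    match i with
    | 0 => simpa using h1 s (by simpa using hs)
    | (j+1) => exact ih h2 j (by simpa using hi) s (by simpa using hs)

lemma adj2_getElem (L : List (Finset ℕ)) (h : Adj2 L) (i k : ℕ) (hk : k = 1 ∨ k = 2)
    (hik : i + k < L.length) : (L[i]'(by omega) ∩ L[i+k]'hik).card = 1 := by
  have hd : i + 1 ≤ L.length := by omega
  apply adj2_get L h i (by omega)
  have hlen : k - 1 < (L.drop (i+1)).length := by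
    rw [List.length_drop]; omega
  have : (L.drop (i+1))[k-1]'hlen = L[i+k]'hik := by
    rw [List.getElem_drop]
    congr 1
    omega
  rw [← this]
  have h2 : k - 1 < ((L.drop (i+1)).take 2).length := by
    rw [List.length_take]; omega
  have := List.getElem_take (xs := L.drop (i+1)) (j := 2) (i := k-1) (h := h2)
  rw [← this]
  exact List.getElem_mem _

lemma pair_inter_card {a b c d : ℕ} (h : (a = c ∧ b ≠ d ∧ a ≠ d ∧ b ≠ c) ∨
    (b = d ∧ a ≠ c ∧ a ≠ d ∧ b ≠ c) ∨ (a = d ∧ b ≠ c ∧ a ≠ c ∧ b ≠ d) ∨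
    (b = c ∧ a ≠ d ∧ a ≠ c ∧ b ≠ d)) :
    (({a, b} : Finset ℕ) ∩ {c, d}).card = 1 := by
  rcases h with ⟨h1, h2, h3, h4⟩ | ⟨h1, h2, h3, h4⟩ | ⟨h1, h2, h3, h4⟩ | ⟨h1, h2, h3, h4⟩
  · have : ({a, b} : Finset ℕ) ∩ {c, d} = {a} := by ext x; simp; omega
    rw [this]; simp
  · have : ({a, b} : Finset ℕ) ∩ {c, d} = {b} := by ext x; simp; omega
    rw [this]; simp
  · have : ({a, b} : Finset ℕ) ∩ {c, d} = {a} := by ext x; simp; omega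
    rw [this]; simp
  · have : ({a, b} : Finset ℕ) ∩ {c, d} = {b} := by ext x; simp; omega
    rw [this]; simp

/-- Key step lemma: prepending a block of pairs `{e, n+1}` keeps `Adj2`. -/
lemma key (n q p : ℕ) (R' : List (Finset ℕ)) (hq : 1 ≤ q) (hqn : q < n)
    (hp : 1 ≤ p) (hpn : p < n)
    (es : List ℕ) (hnd : (es ++ [q, n]).Nodup) (hle : ∀ e ∈ es, 1 ≤ e ∧ e ≤ n)
    (hR : Adj2 ({q, n} :: {p, n} :: R')) :
    Adj2 ((es ++ [q, n]).map (fun e => ({e, n+1} : Finset ℕ)) ++ ({q, n} :: {p, n} :: R')) := by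
  induction es with
  | nil =>
    simp only [List.nil_append, List.map_cons, List.map_nil, List.cons_append, List.nil_append]
    rw [adj2_cons, adj2_cons]
    refine ⟨?_, ?_, hR⟩
    · intro s hs
      simp only [List.take, List.mem_cons, List.not_mem_nil, or_false] at hs
      rcases hs with rfl | rfl
      · exact pair_inter_card (by omega)
      · exact pair_inter_card (by omega)
    · intro s hs
      simp only [List.take, List.mem_cons, List.not_mem_nil, or_false] at hs
      rcases hs with rfl | rfl
      · exact pair_inter_card (by omega)
      · exact pair_inter_card (by omega)
  | cons e es ih =>
    rw [List.cons_append, List.nodup_cons] at hnd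
    have hnd' : (es ++ [q, n]).Nodup := hnd.2
    have hmem : e ∉ es ++ [q, n] := hnd.1
    have hle' : ∀ x ∈ es, 1 ≤ x ∧ x ≤ n := fun x hx => hle x (List.mem_cons_of_mem _ hx)
    have he : 1 ≤ e ∧ e ≤ n := hle e List.mem_cons_self
    simp only [List.cons_append, List.map_cons] at *
    rw [adj2_cons]
    refine ⟨?_, ih hnd' hle'⟩
    intro s hs
    have hlen2 : 2 ≤ ((es ++ [q, n]).map (fun e => ({e, n+1} : Finset ℕ))).length := by
      simp
    rw [List.take_append_of_le_length hlen2, ← List.map_take] at hs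
    obtain ⟨x, hx, rfl⟩ := List.mem_map.mp hs
    have hx' : x ∈ es ++ [q, n] := List.mem_of_mem_take hx
    have hxe : x ≠ e := by rintro rfl; exact hmem hx'
    have hxn : 1 ≤ x ∧ x ≤ n := by
      rcases List.mem_append.mp hx' with h | h
      · exact hle' x h
      · simp at h; omega
    exact pair_inter_card (by omega)

lemma pair_subset_Icc {a b n : ℕ} (ha : 1 ≤ a) (han : a ≤ n) (hb : 1 ≤ b) (hbn : b ≤ n) :
    ({a, b} : Finset ℕ) ⊆ Finset.Icc 1 n := by
  intro x hx; simp at hx; simp [Finset.mem_Icc]; omega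

lemma good : ∀ n, 3 ≤ n → ∃ (R : List (Finset ℕ)) (q p : ℕ) (R' : List (Finset ℕ)),
    R = {q, n} :: {p, n} :: R' ∧ 1 ≤ q ∧ q < n ∧ 1 ≤ p ∧ p < n ∧
    R.length = n.choose 2 ∧ R.Nodup ∧
    (∀ s ∈ R, s ⊆ Finset.Icc 1 n ∧ s.card = 2) ∧
    (∀ A : Finset ℕ, A ⊆ Finset.Icc 1 n → A.card = 2 → A ∈ R) ∧ Adj2 R := by
  intro n hn
  induction n, hn using Nat.le_induction with
  | base =>
    refine ⟨[{1,3},{2,3},{1,2}], 1, 2, [{1,2}], rfl, by norm_num, by norm_num, by norm_num,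
      by norm_num, by norm_num [Nat.choose], ?_, ?_, ?_, ?_⟩
    · decide
    · intro s hs
      simp only [List.mem_cons, List.not_mem_nil, or_false] at hs
      rcases hs with rfl | rfl | rfl
      · exact ⟨pair_subset_Icc (by norm_num) (by norm_num) (by norm_num) (by norm_num),
          Finset.card_pair (by norm_num)⟩
      · exact ⟨pair_subset_Icc (by norm_num) (by norm_num) (by norm_num) (by norm_num),
          Finset.card_pair (by norm_num)⟩
      · exact ⟨pair_subset_Icc (by norm_num) (by norm_num) (by norm_num) (by norm_num),
          Finset.card_pair (by norm_num)⟩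
    · intro A hsub hcard
      have h1 : A ∈ (Finset.Icc 1 3).powersetCard 2 := Finset.mem_powersetCard.mpr ⟨hsub, hcard⟩
      have h2 : (Finset.Icc 1 3).powersetCard 2 = ({{1,2},{1,3},{2,3}} : Finset (Finset ℕ)) := by
        decide
      rw [h2] at h1
      simp only [Finset.mem_insert, Finset.mem_singleton] at h1
      rcases h1 with rfl | rfl | rfl <;> simp
    · refine ⟨?_, ?_, ?_, trivial⟩
      · intro s hs
        simp only [List.take, List.mem_cons, List.not_mem_nil, or_false] at hs
        rcases hs with rfl | rfl
        · exact pair_inter_card (by omega)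
        · exact pair_inter_card (by omega)
      · intro s hs
        simp only [List.take, List.mem_cons, List.not_mem_nil, or_false] at hs
        rcases hs with rfl
        exact pair_inter_card (by omega)
      · intro s hs
        simp at hs
  | succ n hn3 ih =>
    obtain ⟨R, q, p, R', hR, hq1, hqn, hp1, hpn, hlen, hnodup, hmem, hcomp, hadj⟩ := ih
    set es : List ℕ := (List.range' 1 n).filter (fun e => decide (e ≠ q ∧ e ≠ n)) with hes
    set el : List ℕ := es ++ [q, n] with hel
    have hmem_es : ∀ x, x ∈ es ↔ ((1 ≤ x ∧ x ≤ n) ∧ x ≠ q ∧ x ≠ n) := by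
      intro x
      rw [hes, List.mem_filter, List.mem_range'_1]
      simp only [decide_eq_true_eq]
      constructor
      · rintro ⟨h1, h2⟩; exact ⟨by omega, h2⟩
      · rintro ⟨h1, h2⟩; exact ⟨by omega, h2⟩
    have hnd_es : es.Nodup := by
      rw [hes]; exact List.Nodup.filter _ (List.nodup_range' ..)
    have hnd_el : el.Nodup := by
      rw [hel, List.nodup_append]
      refine ⟨hnd_es, by simp; omega, ?_⟩
      intro x hx y hy
      rw [hmem_es] at hx
      simp at hy
      rcases hy with rfl | rfl
      · exact hx.2.1
      · exact hx.2.2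
    have hmem_el : ∀ x, x ∈ el ↔ (1 ≤ x ∧ x ≤ n) := by
      intro x
      rw [hel, List.mem_append, hmem_es]
      simp only [List.mem_cons, List.not_mem_nil, or_false, List.mem_singleton]
      constructor
      · rintro (⟨h1, h2⟩ | rfl | rfl) <;> omega
      · intro h1
        by_cases hxq : x = q
        · right; left; exact hxq
        by_cases hxn : x = n
        · right; right; exact hxn
        · left; exact ⟨h1, hxq, hxn⟩
    have hlen_es : es.length = n - 2 := by
      have h1 : es.toFinset = Finset.Icc 1 n \ {q, n} := by
        ext x
        rw [List.mem_toFinset, hmem_es x]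
        simp only [Finset.mem_sdiff, Finset.mem_Icc, Finset.mem_insert, Finset.mem_singleton]
        omega
      have h2 := List.toFinset_card_of_nodup hnd_es
      rw [h1] at h2
      rw [Finset.card_sdiff_of_subset (by
        intro x hx
        simp only [Finset.mem_insert, Finset.mem_singleton] at hx
        simp only [Finset.mem_Icc]
        omega)] at h2
      rw [Finset.card_pair (by omega), Nat.card_Icc] at h2
      omega
    have hlen_el : el.length = n := by
      rw [hel, List.length_append, hlen_es]
      simp
      omega
    have hbound_el : ∀ x ∈ el, 1 ≤ x ∧ x ≤ n := fun x hx => (hmem_el x).mp hx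
    set Rnew : List (Finset ℕ) := el.map (fun e => ({e, n+1} : Finset ℕ)) ++ R with hRnew
    have hinj_el : ∀ x ∈ el, ∀ y ∈ el, ({x, n+1} : Finset ℕ) = {y, n+1} → x = y := by
      intro x hx y hy hxy
      have hx' := (hmem_el x).mp hx
      have hy' := (hmem_el y).mp hy
      have := Finset.ext_iff.mp hxy x
      simp at this
      omega
    -- decompose el
    obtain ⟨a, t1, ht1⟩ := List.exists_cons_of_ne_nil (l := el)
      (by intro h; rw [h] at hlen_el; simp at hlen_el; omega)
    obtain ⟨b, t2, ht2⟩ := List.exists_cons_of_ne_nil (l := t1)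
      (by intro h; rw [h] at ht1; rw [ht1] at hlen_el; simp at hlen_el; omega)
    have hael : a ∈ el := by rw [ht1]; simp
    have hbel : b ∈ el := by rw [ht1, ht2]; simp
    have ha := (hmem_el a).mp hael
    have hb := (hmem_el b).mp hbel
    have hab : a ≠ b := by
      rw [ht1, ht2] at hnd_el
      rcases List.nodup_cons.mp hnd_el with ⟨h1, _⟩
      intro h; exact h1 (h ▸ List.mem_cons_self)
    refine ⟨Rnew, a, b, t2.map (fun e => ({e, n+1} : Finset ℕ)) ++ R, ?_, ha.1, by omega,
      hb.1, by omega, ?_, ?_, ?_, ?_, ?_⟩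
    · rw [hRnew, ht1, ht2]; simp
    · rw [hRnew]
      rw [List.length_append, List.length_map, hlen_el, hlen]
      have : (n+1).choose 2 = n.choose 1 + n.choose 2 := Nat.choose_succ_succ n 1
      rw [this, Nat.choose_one_right]
    · -- Nodup
      rw [hRnew, List.nodup_append]
      refine ⟨List.Nodup.map_on hinj_el hnd_el, hnodup, ?_⟩
      intro s hs t hs' hst
      subst hst
      obtain ⟨x, hx, rfl⟩ := List.mem_map.mp hs
      have h1 : (n+1) ∈ ({x, n+1} : Finset ℕ) := by simp
      have h2 := (hmem _ hs').1 h1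
      simp [Finset.mem_Icc] at h2
    · -- membership properties
      intro s hs
      rw [hRnew, List.mem_append] at hs
      rcases hs with hs | hs
      · obtain ⟨x, hx, rfl⟩ := List.mem_map.mp hs
        have hx' := (hmem_el x).mp hx
        exact ⟨pair_subset_Icc hx'.1 (by omega) (by omega) (by omega),
          Finset.card_pair (by omega)⟩
      · obtain ⟨h1, h2⟩ := hmem s hs
        refine ⟨h1.trans ?_, h2⟩
        exact Finset.Icc_subset_Icc le_rfl (by omega)
    · -- completeness
      intro A hsub hcard
      by_cases hA : n + 1 ∈ A
      · have hce : (A.erase (n+1)).card = 1 := by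
          rw [Finset.card_erase_of_mem hA, hcard]
        obtain ⟨x, hx⟩ := Finset.card_eq_one.mp hce
        have hxA : x ∈ A := Finset.mem_of_mem_erase (hx ▸ Finset.mem_singleton_self x)
        have hxne : x ≠ n + 1 := Finset.ne_of_mem_erase (hx ▸ Finset.mem_singleton_self x)
        have hxIcc : x ∈ Finset.Icc 1 (n+1) := hsub hxA
        simp [Finset.mem_Icc] at hxIcc
        have hAeq : A = {x, n+1} := by
          rw [Finset.pair_comm, ← hx, Finset.insert_erase hA]
        rw [hRnew, List.mem_append]
        left
        rw [List.mem_map]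
        exact ⟨x, (hmem_el x).mpr ⟨hxIcc.1, by omega⟩, hAeq.symm⟩
      · have hsub' : A ⊆ Finset.Icc 1 n := by
          intro y hy
          have := hsub hy
          simp [Finset.mem_Icc] at this ⊢
          refine ⟨this.1, ?_⟩
          rcases Nat.lt_or_ge y (n+1) with h | h
          · omega
          · exfalso; have : y = n + 1 := by omega
            exact hA (this ▸ hy)
        rw [hRnew, List.mem_append]
        exact Or.inr (hcomp A hsub' hcard)
    · -- Adj2
      rw [hRnew, hR]
      exact key n q p R' hq1 hqn hp1 hpn es (hel ▸ hnd_el)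
        (fun e he => ((hmem_es e).mp he).1) (hR ▸ hadj)

end JohnsonAux

/-- For every `n ≥ 3` there is a Hamiltonian path `S_1, …, S_T` (`T = C(n,2)`)
through all 2-element subsets of `{1,…,n}` in the Johnson graph `J(n,2)`
(consecutive sets intersect in exactly one element) which moreover satisfies
`|S_t ∩ S_{t+2}| = 1` for all `t`. -/
theorem johnson_path_with_two_step_overlap (n : ℕ) (hn : 3 ≤ n) :
    ∃ S : Fin (n.choose 2) → Finset (Fin n),
      (∀ t, (S t).card = 2) ∧
      (∀ A : Finset (Fin n), A.card = 2 → ∃! t, S t = A) ∧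
      (∀ (t : ℕ) (ht : t + 1 < n.choose 2),
        (S ⟨t, by omega⟩ ∩ S ⟨t + 1, ht⟩).card = 1) ∧
      (∀ (t : ℕ) (ht : t + 2 < n.choose 2),
        (S ⟨t, by omega⟩ ∩ S ⟨t + 2, ht⟩).card = 1) := by
  classical
  obtain ⟨R, q, p, R', hRform, hq1, hqn, hp1, hpn, hlen, hnodup, hmem, hcomp, hadj⟩ :=
    JohnsonAux.good n hn
  have hnpos : 0 < n := by omega
  set h : ℕ → Fin n := fun x => ⟨(x - 1) % n, Nat.mod_lt _ hnpos⟩ with hh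
  have hinj : ∀ x ∈ Finset.Icc 1 n, ∀ y ∈ Finset.Icc 1 n, h x = h y → x = y := by
    intro x hx y hy hxy
    simp only [Finset.mem_Icc] at hx hy
    have : (x - 1) % n = (y - 1) % n := congrArg Fin.val hxy
    rw [Nat.mod_eq_of_lt (by omega), Nat.mod_eq_of_lt (by omega)] at this
    omega
  set g : Finset ℕ → Finset (Fin n) := fun s => s.image h with hg
  have hgcard : ∀ s : Finset ℕ, s ⊆ Finset.Icc 1 n → (g s).card = s.card := by
    intro s hs
    exact Finset.card_image_of_injOn (fun x hx y hy => hinj x (hs hx) y (hs hy))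
  have hginter : ∀ s t : Finset ℕ, s ⊆ Finset.Icc 1 n → t ⊆ Finset.Icc 1 n →
      (g s ∩ g t).card = (s ∩ t).card := by
    intro s t hs ht
    have hio : Set.InjOn h (↑s ∪ ↑t) := by
      intro x hx y hy hxy
      rcases hx with hx | hx <;> rcases hy with hy | hy <;>
        exact hinj x (by first | exact hs hx | exact ht hx) y
          (by first | exact hs hy | exact ht hy) hxy
    rw [hg]
    simp only
    rw [← Finset.image_inter_of_injOn s t hio]
    exact hgcard _ (le_trans (Finset.inter_subset_left) hs)
  have hgeq : ∀ s t : Finset ℕ, s ⊆ Finset.Icc 1 n → t ⊆ Finset.Icc 1 n → g s = g t → s = t := by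
    intro s t hs ht hst
    ext x
    constructor
    · intro hx
      have : h x ∈ g t := hst ▸ Finset.mem_image_of_mem h hx
      obtain ⟨y, hy, hyx⟩ := Finset.mem_image.mp this
      rwa [← hinj y (ht hy) x (hs hx) hyx]
    · intro hx
      have : h x ∈ g s := hst ▸ Finset.mem_image_of_mem h hx
      obtain ⟨y, hy, hyx⟩ := Finset.mem_image.mp this
      rwa [← hinj y (hs hy) x (ht hx) hyx]
  have hget_mem : ∀ (i : Fin R.length), R.get i ∈ R := fun i => List.get_mem R i
  refine ⟨fun t => g (R.get (Fin.cast hlen.symm t)), ?_, ?_, ?_, ?_⟩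
  · intro t
    obtain ⟨h1, h2⟩ := hmem _ (hget_mem _)
    rw [hgcard _ h1, h2]
  · intro A hA
    set B : Finset ℕ := A.image (fun i : Fin n => (i : ℕ) + 1) with hB
    have hBsub : B ⊆ Finset.Icc 1 n := by
      intro x hx
      obtain ⟨i, _, rfl⟩ := Finset.mem_image.mp hx
      simp only [Finset.mem_Icc]
      exact ⟨by omega, by have := i.2; omega⟩
    have hBcard : B.card = 2 := by
      rw [hB, Finset.card_image_of_injective _ (fun i j hij => by
        apply Fin.ext; omega), hA]
    have hgB : g B = A := by
      simp only [hg, hB, Finset.image_image]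
      have : (h ∘ fun i : Fin n => (i : ℕ) + 1) = id := by
        funext i
        apply Fin.ext
        simp only [hh, Function.comp_apply, Nat.add_sub_cancel, id_eq]
        exact Nat.mod_eq_of_lt i.2
      rw [this, Finset.image_id]
    obtain ⟨i, hi⟩ := List.mem_iff_get.mp (hcomp B hBsub hBcard)
    refine ⟨Fin.cast hlen i, (congrArg g hi).trans hgB, ?_⟩
    intro t ht
    replace ht : g (R.get (Fin.cast hlen.symm t)) = A := ht
    have hgt : g (R.get (Fin.cast hlen.symm t)) = g (R.get i) := by rw [hi, hgB, ht]
    have hmem1 := hmem _ (hget_mem (Fin.cast hlen.symm t))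
    have hmem2 := hmem _ (hget_mem i)
    have heq : R.get (Fin.cast hlen.symm t) = R.get i :=
      hgeq _ _ hmem1.1 hmem2.1 hgt
    have := List.nodup_iff_injective_get.mp hnodup heq
    apply Fin.ext
    have := congrArg Fin.val this
    simpa using this
  · intro t ht
    have h1 := hmem _ (hget_mem (Fin.cast hlen.symm ⟨t, by omega⟩))
    have h2 := hmem _ (hget_mem (Fin.cast hlen.symm ⟨t + 1, ht⟩))
    rw [hginter _ _ h1.1 h2.1]
    have := JohnsonAux.adj2_getElem R hadj t 1 (Or.inl rfl) (by omega)
    simpa using this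
  · intro t ht
    have h1 := hmem _ (hget_mem (Fin.cast hlen.symm ⟨t, by omega⟩))
    have h2 := hmem _ (hget_mem (Fin.cast hlen.symm ⟨t + 2, ht⟩))
    rw [hginter _ _ h1.1 h2.1]
    have := JohnsonAux.adj2_getElem R hadj t 2 (Or.inr rfl) (by omega)
    simpa using this
end

section
/- (Projection lemma) Let H1 and H2 be Hermitian operators on a nonzero finite-dimensional complex inner product space, with H2 positive semidefinite. Let 𝒮 = ker(H2) be nonzero, let J be the smallest nonzero eigenvalue of H2 (assume H2 ≠ 0), and suppose J > 2‖H1‖. Then λ(H1 + H2) ≥ λ(H1|_𝒮) − ‖H1‖²/(J − 2‖H1‖), where λ(H1|_𝒮) denotes the minimum of ⟨v, H1 v⟩ over unit vectors v ∈ 𝒮. -/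
lemma quad_lower_aux {V : Type*} [NormedAddCommGroup V] [InnerProductSpace ℂ V]
    [FiniteDimensional ℂ V]
    (H2 : V →L[ℂ] V) (hH2 : IsSelfAdjoint H2) (J : ℝ)
    (hJle : ∀ r : ℝ, r ≠ 0 → Module.End.HasEigenvalue (H2 : V →ₗ[ℂ] V) (r : ℂ) → J ≤ r)
    (u : V) (hu : u ∈ (LinearMap.ker (H2 : V →ₗ[ℂ] V))ᗮ) :
    J * ‖u‖ ^ 2 ≤ (inner ℂ u (H2 u) : ℂ).re := by
  have hT : (H2 : V →ₗ[ℂ] V).IsSymmetric := hH2.isSymmetric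
  set n := Module.finrank ℂ V with hn
  have hrank : Module.finrank ℂ V = n := rfl
  set b := hT.eigenvectorBasis hrank with hb
  set μ := hT.eigenvalues hrank with hμ
  set x := b.repr u with hx
  have hptwise : ∀ i, J * ‖x i‖ ^ 2 ≤ μ i * ‖x i‖ ^ 2 := by
    intro i
    by_cases hmu : μ i = 0
    · have hbk : b i ∈ LinearMap.ker (H2 : V →ₗ[ℂ] V) := by
        rw [LinearMap.mem_ker]
        have h2 := hT.apply_eigenvectorBasis hrank i
        rw [show hT.eigenvalues hrank i = μ i from rfl, hmu] at h2
        simpa [← hb] using h2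
      have : x i = 0 := by
        rw [hx, b.repr_apply_apply]
        exact (Submodule.mem_orthogonal _ _).mp hu _ hbk
      simp [this]
    · have := hJle (μ i) hmu ((Module.End.hasEigenvalue_of_hasEigenvector
        (hT.hasEigenvector_eigenvectorBasis hrank i)))
      nlinarith [sq_nonneg ‖x i‖]
  have hinner : (inner ℂ u (H2 u) : ℂ) = ∑ i, (starRingEnd ℂ) (x i) * ((μ i : ℂ) * x i) := by
    have := (b.repr.inner_map_map u (H2 u)).symm
    rw [this, PiLp.inner_apply]
    congr 1
    ext i
    rw [RCLike.inner_apply, mul_comm]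
    congr 1
    exact hT.eigenvectorBasis_apply_self_apply hrank u i
  have hre : (inner ℂ u (H2 u) : ℂ).re = ∑ i, μ i * ‖x i‖ ^ 2 := by
    rw [hinner, Complex.re_sum]
    congr 1; ext i
    have : (starRingEnd ℂ) (x i) * ((μ i : ℂ) * x i)
        = ((μ i * ‖x i‖ ^ 2 : ℝ) : ℂ) := by
      push_cast
      rw [show ((‖x i‖ : ℂ))^2 = (starRingEnd ℂ) (x i) * x i by
        rw [mul_comm, Complex.mul_conj]
        push_cast [Complex.normSq_eq_norm_sq]
        ring]
      ring
    rw [this, Complex.ofReal_re]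
  have hnorm : ‖u‖ ^ 2 = ∑ i, ‖x i‖ ^ 2 := by
    have h1 : ‖u‖ = ‖x‖ := (b.repr.norm_map u).symm
    rw [h1, EuclideanSpace.norm_eq, Real.sq_sqrt (by positivity)]
  rw [hre, hnorm, Finset.mul_sum]
  exact Finset.sum_le_sum fun i _ => hptwise i

set_option maxHeartbeats 1000000 in
/-- **Projection lemma.** Let `H1, H2` be Hermitian operators on a nonzero
finite-dimensional complex inner product space, with `H2` positive semidefinite,
`𝒮 = ker H2` nonzero, `J` the smallest nonzero eigenvalue of `H2` (so `H2 ≠ 0`),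
and `J > 2‖H1‖`.  Then every eigenvalue `lam` of `H1 + H2` satisfies
`lam ≥ λ(H1|_𝒮) − ‖H1‖²/(J − 2‖H1‖)`, where `λ(H1|_𝒮)` is the minimum of
`⟨v, H1 v⟩` over unit vectors `v ∈ 𝒮`. -/
theorem projection_lemma {V : Type*} [NormedAddCommGroup V] [InnerProductSpace ℂ V]
    [FiniteDimensional ℂ V] [Nontrivial V]
    (H1 H2 : V →L[ℂ] V) (hH1 : IsSelfAdjoint H1) (hH2 : IsSelfAdjoint H2)
    (hpsd : ∀ v : V, 0 ≤ (inner ℂ v (H2 v) : ℂ).re)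
    (hker : ∃ v : V, v ≠ 0 ∧ H2 v = 0)
    (hH2ne : H2 ≠ 0)
    (J : ℝ)
    (hJ : IsLeast {r : ℝ | r ≠ 0 ∧
      Module.End.HasEigenvalue (H2 : V →ₗ[ℂ] V) (r : ℂ)} J)
    (hgap : 2 * ‖H1‖ < J) :
    ∀ lam : ℝ, Module.End.HasEigenvalue ((H1 + H2 : V →L[ℂ] V) : V →ₗ[ℂ] V) (lam : ℂ) →
      sInf {r : ℝ | ∃ v : V, ‖v‖ = 1 ∧ H2 v = 0 ∧ r = (inner ℂ v (H1 v) : ℂ).re}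
        - ‖H1‖ ^ 2 / (J - 2 * ‖H1‖) ≤ lam := by
  intro lam hlam
  set h := ‖H1‖ with hh
  have hh0 : 0 ≤ h := norm_nonneg _
  have hg : 0 < J - 2 * h := by linarith
  -- bound on quadratic forms of H1
  have key : ∀ x y : V, |(inner ℂ x (H1 y) : ℂ).re| ≤ h * ‖x‖ * ‖y‖ := by
    intro x y
    calc |(inner ℂ x (H1 y) : ℂ).re| ≤ ‖(inner ℂ x (H1 y) : ℂ)‖ := Complex.abs_re_le_norm _
      _ ≤ ‖x‖ * ‖H1 y‖ := norm_inner_le_norm _ _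
      _ ≤ ‖x‖ * (h * ‖y‖) := by
          have := H1.le_opNorm y
          have h0 : 0 ≤ ‖x‖ := norm_nonneg _
          nlinarith [norm_nonneg (H1 y)]
      _ = h * ‖x‖ * ‖y‖ := by ring
  -- properties of the infimum a
  set S := {r : ℝ | ∃ v : V, ‖v‖ = 1 ∧ H2 v = 0 ∧ r = (inner ℂ v (H1 v) : ℂ).re} with hSdef
  have hSne : S.Nonempty := by
    obtain ⟨v, hv0, hv2⟩ := hker
    refine ⟨(inner ℂ (((‖v‖:ℂ))⁻¹ • v) (H1 (((‖v‖:ℂ))⁻¹ • v)) : ℂ).re, ((‖v‖:ℂ))⁻¹ • v, ?_, ?_, rfl⟩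
    · rw [norm_smul, norm_inv, Complex.norm_real, norm_norm,
        inv_mul_cancel₀ (norm_ne_zero_iff.mpr hv0)]
    · rw [map_smul, hv2, smul_zero]
  have hSbdd : ∀ r ∈ S, -h ≤ r ∧ r ≤ h := by
    rintro r ⟨v, hv1, _, rfl⟩
    have := key v v
    rw [hv1] at this
    constructor <;> [nlinarith [abs_nonneg ((inner ℂ v (H1 v):ℂ).re), neg_abs_le ((inner ℂ v (H1 v):ℂ).re)];
      nlinarith [le_abs_self ((inner ℂ v (H1 v):ℂ).re)]]
  have hSbddBelow : BddBelow S := ⟨-h, fun r hr => (hSbdd r hr).1⟩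
  set a := sInf S with ha
  have haS : ∀ r ∈ S, a ≤ r := fun r hr => csInf_le hSbddBelow hr
  have hah : a ≤ h := by
    obtain ⟨r, hr⟩ := hSne
    exact le_trans (haS r hr) (hSbdd r hr).2
  have hha : -h ≤ a := le_csInf hSne fun r hr => (hSbdd r hr).1
  -- eigenvector
  obtain ⟨w0, hw0⟩ := hlam.exists_hasEigenvector
  have hw0ne : w0 ≠ 0 := hw0.2
  set w : V := ((‖w0‖:ℂ))⁻¹ • w0 with hw
  have hwnorm : ‖w‖ = 1 := by
    rw [hw, norm_smul, norm_inv, Complex.norm_real, norm_norm,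
      inv_mul_cancel₀ (norm_ne_zero_iff.mpr hw0ne)]
  have heig : (H1 + H2) w = (lam : ℂ) • w := by
    have := hw0.apply_eq_smul
    rw [hw]
    simp only [map_smul]
    rw [show ((H1 + H2 : V →L[ℂ] V) : V →ₗ[ℂ] V) w0 = (H1 + H2) w0 from rfl] at this
    rw [this, smul_comm]
  have hlam_eq : lam = (inner ℂ w ((H1 + H2) w) : ℂ).re := by
    rw [heig, inner_smul_right]
    rw [inner_self_eq_norm_sq_to_K, hwnorm]
    simp
  -- decomposition
  set K := LinearMap.ker (H2 : V →ₗ[ℂ] V) with hK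
  set v : V := (K.orthogonalProjectionOnto w : V) with hv
  set u : V := w - v with hu
  have hvK : v ∈ K := (K.orthogonalProjectionOnto w).2
  have huK : u ∈ Kᗮ := Submodule.sub_starProjection_mem_orthogonal (K := K) w
  have hH2v : H2 v = 0 := hvK
  have hwvu : w = v + u := by rw [hu]; abel
  have hinner_vu : (inner ℂ v u : ℂ) = 0 :=
    (Submodule.mem_orthogonal K u).mp huK v hvK
  have hpyth : ‖v‖ ^ 2 + ‖u‖ ^ 2 = 1 := by
    have := norm_add_sq_eq_norm_sq_add_norm_sq_of_inner_eq_zero (𝕜 := ℂ) v u hinner_vu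
    rw [← hwvu, hwnorm] at this
    nlinarith [this]
  set c := ‖v‖ with hc
  set s := ‖u‖ with hs
  have hc0 : 0 ≤ c := norm_nonneg _
  have hs0 : 0 ≤ s := norm_nonneg _
  have hc1 : c ≤ 1 := by nlinarith
  -- H2 part
  have hH2part : J * s ^ 2 ≤ (inner ℂ w (H2 w) : ℂ).re := by
    have hJle : ∀ r : ℝ, r ≠ 0 → Module.End.HasEigenvalue (H2 : V →ₗ[ℂ] V) (r : ℂ) → J ≤ r :=
      fun r hr h' => hJ.2 ⟨hr, h'⟩
    have hq := quad_lower_aux H2 hH2 J hJle u huK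
    have : (inner ℂ w (H2 w) : ℂ) = inner ℂ u (H2 u) := by
      rw [hwvu]
      have h1 : H2 (v + u) = H2 u := by rw [map_add, hH2v, zero_add]
      rw [h1, inner_add_left]
      have h2 : (inner ℂ v (H2 u) : ℂ) = 0 := by
        have : (inner ℂ v (H2 u) : ℂ) = inner ℂ (H2 v) u := by
          rw [← ContinuousLinearMap.adjoint_inner_left, hH2.adjoint_eq]
        rw [this, hH2v, inner_zero_left]
      rw [h2, zero_add]
    rw [this]
    exact hq
  -- H1 parts
  have hvv : a * c ^ 2 ≤ (inner ℂ v (H1 v) : ℂ).re := by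
    by_cases hvz : v = 0
    · simp [hvz, hc, inner_zero_left]
    · have hcpos : 0 < c := norm_pos_iff.mpr hvz
      set v' : V := ((‖v‖:ℂ))⁻¹ • v with hv'
      have hv'1 : ‖v'‖ = 1 := by
        rw [hv', norm_smul, norm_inv, Complex.norm_real, norm_norm,
          inv_mul_cancel₀ (norm_ne_zero_iff.mpr hvz)]
      have hv'K : H2 v' = 0 := by rw [hv', map_smul, hH2v, smul_zero]
      have hmem : (inner ℂ v' (H1 v') : ℂ).re ∈ S := ⟨v', hv'1, hv'K, rfl⟩
      have hle := haS _ hmem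
      have hexp : (inner ℂ v' (H1 v') : ℂ).re = c⁻¹ ^ 2 * (inner ℂ v (H1 v) : ℂ).re := by
        rw [hv', map_smul, inner_smul_left, inner_smul_right]
        push_cast
        rw [show (starRingEnd ℂ) ((‖v‖:ℂ)⁻¹) = ((‖v‖:ℂ))⁻¹ by
          rw [map_inv₀]; congr 1; exact Complex.conj_ofReal _]
        rw [show ((‖v‖:ℂ))⁻¹ * (((‖v‖:ℂ))⁻¹ * (inner ℂ v (H1 v) : ℂ))
          = (((‖v‖⁻¹ ^ 2 : ℝ)):ℂ) * (inner ℂ v (H1 v) : ℂ) by push_cast; ring]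
        rw [Complex.re_ofReal_mul]
      rw [hexp] at hle
      have hc2 : (0:ℝ) < c ^ 2 := by positivity
      calc a * c ^ 2 ≤ (c⁻¹ ^ 2 * (inner ℂ v (H1 v) : ℂ).re) * c ^ 2 := by nlinarith
        _ = (inner ℂ v (H1 v) : ℂ).re := by field_simp
  have hvu : -(h * c * s) ≤ (inner ℂ v (H1 u) : ℂ).re := by
    have := key v u
    rw [← hc, ← hs] at this
    linarith [neg_abs_le ((inner ℂ v (H1 u):ℂ).re)]
  have huu : -(h * s ^ 2) ≤ (inner ℂ u (H1 u) : ℂ).re := by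
    have := key u u
    rw [← hs] at this
    have h2 : |(inner ℂ u (H1 u):ℂ).re| ≤ h * s ^ 2 := by nlinarith
    linarith [neg_abs_le ((inner ℂ u (H1 u):ℂ).re)]
  -- expansion of H1 quadratic form
  have hH1part : (inner ℂ w (H1 w) : ℂ).re
      = (inner ℂ v (H1 v) : ℂ).re + 2 * (inner ℂ v (H1 u) : ℂ).re + (inner ℂ u (H1 u) : ℂ).re := by
    rw [hwvu, map_add, inner_add_left, inner_add_right, inner_add_right]
    have hsym : (inner ℂ u (H1 v) : ℂ) = (starRingEnd ℂ) (inner ℂ v (H1 u) : ℂ) := by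
      rw [← ContinuousLinearMap.adjoint_inner_left, hH1.adjoint_eq, ← inner_conj_symm]
    rw [Complex.add_re, Complex.add_re, Complex.add_re, hsym, Complex.conj_re]
    ring
  -- final algebra
  have hlamge : a * c ^ 2 - 2 * (h * c * s) - h * s ^ 2 + J * s ^ 2 ≤ lam := by
    rw [hlam_eq]
    have : (inner ℂ w ((H1 + H2) w) : ℂ).re = (inner ℂ w (H1 w) : ℂ).re + (inner ℂ w (H2 w) : ℂ).re := by
      simp [inner_add_right]
    rw [this, hH1part]
    linarith
  have step1 : a - 2 * h * s + (J - 2 * h) * s ^ 2 ≤ lam := by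
    nlinarith [mul_nonneg (mul_nonneg hh0 hs0) (sub_nonneg.mpr hc1),
      mul_nonneg (sq_nonneg s) (sub_nonneg.mpr hah)]
  have step2 : a - h ^ 2 / (J - 2 * h) ≤ a - 2 * h * s + (J - 2 * h) * s ^ 2 := by
    have hsq := sq_nonneg ((J - 2 * h) * s - h)
    have hdiv : h ^ 2 / (J - 2 * h) * (J - 2 * h) = h ^ 2 :=
      div_mul_cancel₀ _ (ne_of_gt hg)
    nlinarith [hsq, hdiv, hg]
  calc a - h ^ 2 / (J - 2 * h) ≤ a - 2 * h * s + (J - 2 * h) * s ^ 2 := step2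
    _ ≤ lam := step1
end

section
/- Let n ≥ 1 be a natural number, let H be a Hermitian operator on ℂ^{2^n}, let a < b be reals, let β ≥ n/(b−a), let δ ∈ (0,1) satisfy (1−δ)/(1+δ) ≥ e^{−0.3n}, and set Z = tr(exp(−βH)). Let Z̃ be any real with (1−δ)Z ≤ Z̃ ≤ (1+δ)Z. Then: (i) if λ(H) ≤ a, then Z̃ ≥ (1−δ)e^{−βa}; and (ii) if λ(H) ≥ b, then Z̃ ≤ (1+δ)·2^n·e^{−βb} ≤ (1−δ)e^{−βa}. Hence comparing Z̃ with the threshold (1−δ)e^{−βa} decides whether λ(H) ≤ a or λ(H) ≥ b. -/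
theorem trace_exp_herm (m : Type*) [Fintype m] [DecidableEq m] (H : Matrix m m ℂ)
    (hH : H.IsHermitian) (β : ℝ) :
    (Matrix.trace (NormedSpace.exp ((-(β : ℂ)) • H))).re
      = ∑ i, Real.exp (-β * hH.eigenvalues i) := by
  set U := (hH.eigenvectorUnitary : Matrix m m ℂ) with hU
  have hst : star U * U = 1 := (Matrix.mem_unitaryGroup_iff').mp hH.eigenvectorUnitary.2
  have hUinv : U⁻¹ = star U := Matrix.inv_eq_left_inv hst
  have hunit : IsUnit U := by
    refine Matrix.isUnit_iff_isUnit_det U |>.mpr ?_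
    exact Matrix.isUnit_det_of_left_inverse hst
  have hconj : (-(β : ℂ)) • H
      = U * Matrix.diagonal (fun i => (-(β : ℂ)) * (hH.eigenvalues i : ℂ)) * U⁻¹ := by
    nth_rewrite 1 [hH.spectral_theorem]
    rw [hUinv]
    rw [show (Matrix.diagonal (fun i => (-(β : ℂ)) * (hH.eigenvalues i : ℂ)))
        = (-(β:ℂ)) • Matrix.diagonal (RCLike.ofReal ∘ hH.eigenvalues) by
      ext i j; by_cases h : i = j <;> simp [h, Matrix.diagonal_apply, Function.comp]]
    simp [smul_mul_assoc, mul_smul_comm, hU]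
  rw [hconj, Matrix.exp_conj _ _ hunit, Matrix.exp_diagonal,
    Matrix.trace_mul_cycle, hUinv, hst, one_mul, Matrix.trace_diagonal]
  rw [Complex.re_sum]
  congr 1; ext i
  rw [Pi.exp_def, ← Complex.exp_eq_exp_ℂ]
  show (Complex.exp (-(β:ℂ) * (hH.eigenvalues i : ℂ))).re = _
  rw [show (-(β:ℂ)) * (hH.eigenvalues i : ℂ) = ((-β * hH.eigenvalues i : ℝ) : ℂ) by
    push_cast; ring]
  exact Complex.exp_ofReal_re _

/-- Deciding the local Hamiltonian problem from an approximation of the quantum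
partition function.  For a Hermitian `H` on `ℂ^{2^n}`, `a < b`, `β ≥ n/(b−a)`,
`δ ∈ (0,1)` with `(1−δ)/(1+δ) ≥ e^{−0.3n}`, `Z = tr(exp(−βH))` and any `Z̃` with
`(1−δ)Z ≤ Z̃ ≤ (1+δ)Z`:
(i) if `λ(H) ≤ a` then `Z̃ ≥ (1−δ)e^{−βa}`;
(ii) if `λ(H) ≥ b` then `Z̃ ≤ (1+δ)·2^n·e^{−βb} ≤ (1−δ)e^{−βa}`. -/
theorem decide_LH_from_QPF (n : ℕ) (hn : 1 ≤ n)
    (H : Matrix (Fin (2 ^ n)) (Fin (2 ^ n)) ℂ) (hH : H.IsHermitian)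
    (a b β δ Zt : ℝ) (hab : a < b) (hβ : (n : ℝ) / (b - a) ≤ β)
    (hδ0 : 0 < δ) (hδ1 : δ < 1)
    (hδ : Real.exp (-(0.3) * n) ≤ (1 - δ) / (1 + δ))
    (hZlo : (1 - δ) * (Matrix.trace (NormedSpace.exp ((-(β : ℂ)) • H))).re ≤ Zt)
    (hZhi : Zt ≤ (1 + δ) * (Matrix.trace (NormedSpace.exp ((-(β : ℂ)) • H))).re) :
    ((∃ i, hH.eigenvalues i ≤ a) → (1 - δ) * Real.exp (-β * a) ≤ Zt) ∧
    ((∀ i, b ≤ hH.eigenvalues i) →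
      Zt ≤ (1 + δ) * 2 ^ n * Real.exp (-β * b) ∧
      (1 + δ) * 2 ^ n * Real.exp (-β * b) ≤ (1 - δ) * Real.exp (-β * a)) := by
  have hba : (0 : ℝ) < b - a := sub_pos.mpr hab
  have hn1 : (1 : ℝ) ≤ (n : ℝ) := by exact_mod_cast hn
  have hβ0 : 0 ≤ β := le_trans (by positivity) hβ
  have hβn : (n : ℝ) ≤ β * (b - a) := by
    rw [div_le_iff₀ hba] at hβ; linarith
  rw [trace_exp_herm _ H hH β] at hZlo hZhi
  set Z := ∑ i, Real.exp (-β * hH.eigenvalues i) with hZ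
  constructor
  · rintro ⟨i, hi⟩
    have h1 : Real.exp (-β * a) ≤ Real.exp (-β * hH.eigenvalues i) := by
      apply Real.exp_le_exp.mpr; nlinarith
    have h2 : Real.exp (-β * hH.eigenvalues i) ≤ Z := by
      apply Finset.single_le_sum (fun j _ => (Real.exp_pos _).le) (Finset.mem_univ i)
    calc (1 - δ) * Real.exp (-β * a) ≤ (1 - δ) * Z := by
          apply mul_le_mul_of_nonneg_left (le_trans h1 h2); linarith
      _ ≤ Zt := hZlo
  · intro hb
    have hZle : Z ≤ (2 ^ n : ℝ) * Real.exp (-β * b) := by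
      calc Z ≤ ∑ _i : Fin (2 ^ n), Real.exp (-β * b) := by
            apply Finset.sum_le_sum
            intro i _
            apply Real.exp_le_exp.mpr
            nlinarith [hb i]
        _ = (2 ^ n : ℝ) * Real.exp (-β * b) := by
            rw [Finset.sum_const, Finset.card_univ, Fintype.card_fin, nsmul_eq_mul]
            push_cast; ring
    refine ⟨?_, ?_⟩
    · calc Zt ≤ (1 + δ) * Z := hZhi
        _ ≤ (1 + δ) * 2 ^ n * Real.exp (-β * b) := by
            rw [mul_assoc]
            apply mul_le_mul_of_nonneg_left hZle; linarith
    · -- reduce to 2^n * exp(-β(b-a)) ≤ (1-δ)/(1+δ)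
      have key : (2 ^ n : ℝ) * Real.exp (-β * b) * (1 + δ)
          ≤ (1 - δ) * Real.exp (-β * a) := by
        have h2n : (2 ^ n : ℝ) = Real.exp (n * Real.log 2) := by
          rw [Real.exp_nat_mul, Real.exp_log (by norm_num)]
        have hlog2 : Real.log 2 ≤ 0.7 := le_of_lt (by
          calc Real.log 2 < 0.6931471808 := Real.log_two_lt_d9
            _ ≤ 0.7 := by norm_num)
        have step : (2 ^ n : ℝ) * Real.exp (-β * b)
            ≤ Real.exp (-(0.3) * n) * Real.exp (-β * a) := by
          rw [h2n, ← Real.exp_add, ← Real.exp_add]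
          apply Real.exp_le_exp.mpr
          have : (0.7 : ℝ) * n - β * (b - a) ≤ -(0.3) * n := by nlinarith
          nlinarith
        have hδ' : Real.exp (-(0.3) * n) * (1 + δ) ≤ 1 - δ := by
          have := (le_div_iff₀ (by linarith : (0:ℝ) < 1 + δ)).mp hδ
          linarith
        calc (2 ^ n : ℝ) * Real.exp (-β * b) * (1 + δ)
            ≤ Real.exp (-(0.3) * n) * Real.exp (-β * a) * (1 + δ) := by
              apply mul_le_mul_of_nonneg_right step; linarith
          _ = Real.exp (-(0.3) * n) * (1 + δ) * Real.exp (-β * a) := by ring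
          _ ≤ (1 - δ) * Real.exp (-β * a) := by
              apply mul_le_mul_of_nonneg_right hδ' (Real.exp_pos _).le
      calc (1 + δ) * 2 ^ n * Real.exp (-β * b)
          = (2 ^ n : ℝ) * Real.exp (-β * b) * (1 + δ) := by ring
        _ ≤ (1 - δ) * Real.exp (-β * a) := key
end

section
/- Let N ≥ 1 and T ≥ 1 be natural numbers, let β > 0, set Δ = β/T, and let E : {1,…,N} → ℝ satisfy 0 ≤ E_p < 1 for all p. Let δ ∈ [0,1). For each j ∈ {1,…,T} let M_j = #{p : (j−1)/T ≤ E_p < j/T}, let M'_j = #{p : (2j−3)/(2T) ≤ E_p < (2j+1)/(2T)}, and let M̃_j be a real number with (1−δ)M_j ≤ M̃_j ≤ (1+δ)M'_j. Then, writing Z = Σ_{p=1}^{N} e^{−βE_p}, it holds that (1−δ)Z ≤ Σ_{j=1}^{T} M̃_j e^{−(j−1)Δ} ≤ (1+δ)(1 + e^{Δ} + e^{2Δ})Z. -/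
open Finset

/-- Approximating a partition function by binned eigenvalue counts.
With `T` bins of width `1/T` on the energy range `[0,1)`, `Δ = β/T`,
`M_j` the exact count in bin `j`, `M'_j` the count in bin `j` enlarged by half
a bin on each side, and `M̃_j` any real with `(1−δ)M_j ≤ M̃_j ≤ (1+δ)M'_j`,
the sum `Σ_j M̃_j e^{−(j−1)Δ}` approximates `Z = Σ_p e^{−βE_p}` as
`(1−δ)Z ≤ Σ_j M̃_j e^{−(j−1)Δ} ≤ (1+δ)(1+e^Δ+e^{2Δ})Z`.
(Bins are indexed here by `j : Fin T`, with `(j : ℕ)` playing the role of `j−1`.) -/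
theorem partition_function_from_counts (N T : ℕ) (hN : 1 ≤ N) (hT : 1 ≤ T)
    (β : ℝ) (hβ : 0 < β)
    (E : Fin N → ℝ) (hE : ∀ p, 0 ≤ E p ∧ E p < 1)
    (δ : ℝ) (hδ0 : 0 ≤ δ) (hδ1 : δ < 1)
    (Mt : Fin T → ℝ)
    (hMlo : ∀ j : Fin T,
      (1 - δ) * (Set.ncard {p : Fin N |
        (j : ℝ) / T ≤ E p ∧ E p < ((j : ℝ) + 1) / T} : ℝ) ≤ Mt j)
    (hMhi : ∀ j : Fin T,
      Mt j ≤ (1 + δ) * (Set.ncard {p : Fin N |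
        (2 * (j : ℝ) - 1) / (2 * T) ≤ E p ∧ E p < (2 * (j : ℝ) + 3) / (2 * T)} : ℝ)) :
    (1 - δ) * (∑ p, Real.exp (-β * E p))
        ≤ ∑ j : Fin T, Mt j * Real.exp (-(j : ℝ) * (β / T)) ∧
    ∑ j : Fin T, Mt j * Real.exp (-(j : ℝ) * (β / T))
        ≤ (1 + δ) * (1 + Real.exp (β / T) + Real.exp (2 * (β / T)))
            * ∑ p, Real.exp (-β * E p) := by
  classical
  have hT' : (0:ℝ) < (T:ℝ) := by exact_mod_cast hT
  have hβT : 0 < β / T := div_pos hβ hT'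
  have hk0 : ∀ p, 0 ≤ (T:ℝ) * E p := fun p => mul_nonneg hT'.le (hE p).1
  have hkT : ∀ p : Fin N, ⌊(T:ℝ) * E p⌋₊ < T := by
    intro p
    rw [Nat.floor_lt (hk0 p)]
    nlinarith [(hE p).2, (hE p).1]
  set kf : Fin N → Fin T := fun p => ⟨⌊(T:ℝ) * E p⌋₊, hkT p⟩ with hkf
  have hkle : ∀ p, (((kf p : ℕ)) : ℝ) ≤ (T:ℝ) * E p := fun p => Nat.floor_le (hk0 p)
  have hklt : ∀ p, (T:ℝ) * E p < ((kf p : ℕ) : ℝ) + 1 := fun p => Nat.lt_floor_add_one _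
  have hncard : ∀ (P : Fin N → Prop),
      (Set.ncard {p | P p}) = (univ.filter (fun p => P p)).card := by
    intro P
    rw [Set.ncard_eq_toFinset_card', Set.toFinset_setOf]
  -- exact bin counts
  have hcardA : ∀ j : Fin T,
      (Set.ncard {p : Fin N | (j : ℝ) / T ≤ E p ∧ E p < ((j : ℝ) + 1) / T} : ℕ)
        = (univ.filter (fun p => kf p = j)).card := by
    intro j
    rw [hncard]
    congr 1
    ext p
    simp only [mem_filter, mem_univ, true_and]
    constructor
    · rintro ⟨h1, h2⟩
      apply Fin.ext
      show ⌊(T:ℝ) * E p⌋₊ = (j : ℕ)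
      rw [Nat.floor_eq_iff (by exact_mod_cast hk0 p)]
      have ha := (div_le_iff₀ hT').mp h1
      have hb := (lt_div_iff₀ hT').mp h2
      constructor
      · nlinarith
      · nlinarith
    · intro h
      have h1 : (((j:ℕ)):ℝ) ≤ (T:ℝ) * E p := by rw [← h]; exact hkle p
      have h2 : (T:ℝ) * E p < ((j:ℕ):ℝ) + 1 := by rw [← h]; exact hklt p
      constructor
      · rw [div_le_iff₀ hT']; nlinarith
      · rw [lt_div_iff₀ hT']; nlinarith
  -- the widened-bin condition
  set cond : Fin T → Fin N → Prop := fun j p =>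
    (2 * (j : ℝ) - 1) / (2 * T) ≤ E p ∧ E p < (2 * (j : ℝ) + 3) / (2 * T) with hcond
  have hcardB : ∀ j : Fin T,
      (Set.ncard {p : Fin N |
        (2 * (j : ℝ) - 1) / (2 * T) ≤ E p ∧ E p < (2 * (j : ℝ) + 3) / (2 * T)} : ℕ)
        = (univ.filter (fun p => cond j p)).card := by
    intro j
    rw [hncard]
    congr
  -- lower bound key
  have key1 : (∑ p, Real.exp (-β * E p))
      ≤ ∑ j : Fin T, ((univ.filter (fun p => kf p = j)).card : ℝ)
          * Real.exp (-(j : ℝ) * (β / T)) := by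
    have h1 : ∀ j : Fin T, ∑ p ∈ univ.filter (fun p => kf p = j), Real.exp (-β * E p)
        ≤ ((univ.filter (fun p => kf p = j)).card : ℝ) * Real.exp (-(j : ℝ) * (β / T)) := by
      intro j
      rw [← nsmul_eq_mul, ← Finset.sum_const]
      apply Finset.sum_le_sum
      intro p hp
      simp only [mem_filter, mem_univ, true_and] at hp
      apply Real.exp_le_exp.mpr
      have hj : ((j:ℕ):ℝ) ≤ (T:ℝ) * E p := by rw [← hp]; exact hkle p
      have hc : (T:ℝ) * (β / T) = β := by field_simp
      nlinarith [mul_le_mul_of_nonneg_right hj hβT.le]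
    calc ∑ p, Real.exp (-β * E p)
        = ∑ j : Fin T, ∑ p ∈ univ.filter (fun p => kf p = j), Real.exp (-β * E p) :=
          (Finset.sum_fiberwise _ _ _).symm
      _ ≤ _ := Finset.sum_le_sum (fun j _ => h1 j)
  -- upper bound key
  have inner : ∀ p : Fin N,
      ∑ j ∈ univ.filter (fun j : Fin T => cond j p), Real.exp (-(j : ℝ) * (β / T))
        ≤ (1 + Real.exp (β / T) + Real.exp (2 * (β / T))) * Real.exp (-β * E p) := by
    intro p
    have hkle' := hkle p
    have hklt' := hklt p
    obtain ⟨k, hkdef⟩ : ∃ k : ℕ, (kf p : ℕ) = k := ⟨_, rfl⟩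
    rw [hkdef] at hkle' hklt'
    have hsub : (univ.filter (fun j : Fin T => cond j p)).image Fin.val
        ⊆ Finset.Icc (k - 1) (k + 1) := by
      intro m hm
      simp only [mem_image, mem_filter, mem_univ, true_and] at hm
      obtain ⟨j, ⟨h1, h2⟩, rfl⟩ := hm
      have h2T : (0:ℝ) < 2 * T := by positivity
      have ha := (div_le_iff₀ h2T).mp h1
      have hb := (lt_div_iff₀ h2T).mp h2
      have hm1 : (j : ℕ) < k + 2 := by
        have : ((j:ℕ):ℝ) < (k:ℝ) + 2 := by push_cast; nlinarith
        exact_mod_cast this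
      have hm2 : k < (j : ℕ) + 2 := by
        have : (k:ℝ) < ((j:ℕ):ℝ) + 2 := by push_cast; nlinarith
        exact_mod_cast this
      simp only [Finset.mem_Icc]
      omega
    have step1 : ∑ j ∈ univ.filter (fun j : Fin T => cond j p), Real.exp (-(j : ℝ) * (β / T))
        = ∑ m ∈ (univ.filter (fun j : Fin T => cond j p)).image Fin.val,
            Real.exp (-(m : ℝ) * (β / T)) := by
      rw [Finset.sum_image (fun x _ y _ h => Fin.val_injective h)]
    have step3 : ∑ m ∈ Finset.Icc (k - 1) (k + 1), Real.exp (-(m : ℝ) * (β / T))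
        ≤ (1 + Real.exp (β / T) + Real.exp (2 * (β / T)))
            * Real.exp (-((k : ℝ) + 1) * (β / T)) := by
      rcases Nat.eq_zero_or_pos k with rfl | hk
      ·
        rw [show Finset.Icc (0 - 1) (0 + 1) = ({0, 1} : Finset ℕ) from by decide]
        rw [Finset.sum_insert (by decide), Finset.sum_singleton]
        have e1 : Real.exp (β / T) * Real.exp (-((0:ℝ) + 1) * (β / T)) = 1 := by
          rw [← Real.exp_add]; norm_num
        have e2 : Real.exp (2 * (β / T)) * Real.exp (-((0:ℝ) + 1) * (β / T))
            = Real.exp (β / T) := by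
          rw [← Real.exp_add]; ring_nf
        have hp1 : (0:ℝ) < Real.exp (-((0:ℝ) + 1) * (β / T)) := Real.exp_pos _
        have hp2 : (1:ℝ) ≤ Real.exp (β / T) := Real.one_le_exp hβT.le
        have hcast0 : Real.exp (-((0:ℕ):ℝ) * (β / T)) = 1 := by norm_num
        have hcast1 : Real.exp (-((1:ℕ):ℝ) * (β / T))
            = Real.exp (-((0:ℝ) + 1) * (β / T)) := by norm_num
        rw [hcast0, hcast1]
        nlinarith
      · obtain ⟨m, rfl⟩ := Nat.exists_eq_add_of_le hk
        have hIcc : Finset.Icc (1 + m - 1) (1 + m + 1) = {m, m + 1, m + 2} := by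
          ext x; simp only [Finset.mem_Icc, Finset.mem_insert, Finset.mem_singleton]; omega
        rw [hIcc, Finset.sum_insert (by simp only [Finset.mem_insert, Finset.mem_singleton]; omega), Finset.sum_insert (by simp),
          Finset.sum_singleton]
        have e0 : Real.exp (-(m : ℝ) * (β / T))
            = Real.exp (2 * (β / T)) * Real.exp (-(((1 + m : ℕ) : ℝ) + 1) * (β / T)) := by
          rw [← Real.exp_add]; push_cast; ring_nf
        have e1 : Real.exp (-((m + 1 : ℕ) : ℝ) * (β / T))
            = Real.exp (β / T) * Real.exp (-(((1 + m : ℕ) : ℝ) + 1) * (β / T)) := by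
          rw [← Real.exp_add]; push_cast; ring_nf
        have e2 : Real.exp (-((m + 2 : ℕ) : ℝ) * (β / T))
            = Real.exp (-(((1 + m : ℕ) : ℝ) + 1) * (β / T)) := by
          push_cast; ring_nf
        rw [e0, e1, e2]
        ring_nf
        nlinarith [Real.exp_pos (-(((1 + m : ℕ) : ℝ) + 1) * (β / T))]
    have step4 : Real.exp (-((k : ℝ) + 1) * (β / T)) ≤ Real.exp (-β * E p) := by
      apply Real.exp_le_exp.mpr
      have hc : (T:ℝ) * (β / T) = β := by field_simp
      nlinarith [mul_le_mul_of_nonneg_right hklt'.le hβT.le]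
    calc ∑ j ∈ univ.filter (fun j : Fin T => cond j p), Real.exp (-(j : ℝ) * (β / T))
        = ∑ m ∈ (univ.filter (fun j : Fin T => cond j p)).image Fin.val,
            Real.exp (-(m : ℝ) * (β / T)) := step1
      _ ≤ ∑ m ∈ Finset.Icc (k - 1) (k + 1), Real.exp (-(m : ℝ) * (β / T)) :=
          Finset.sum_le_sum_of_subset_of_nonneg hsub (fun _ _ _ => (Real.exp_pos _).le)
      _ ≤ (1 + Real.exp (β / T) + Real.exp (2 * (β / T)))
            * Real.exp (-((k : ℝ) + 1) * (β / T)) := step3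
      _ ≤ _ := mul_le_mul_of_nonneg_left step4 (by positivity)
  have key2 : ∑ j : Fin T, ((univ.filter (fun p => cond j p)).card : ℝ)
        * Real.exp (-(j : ℝ) * (β / T))
      ≤ (1 + Real.exp (β / T) + Real.exp (2 * (β / T))) * ∑ p, Real.exp (-β * E p) := by
    have hswap : ∑ j : Fin T, ((univ.filter (fun p => cond j p)).card : ℝ)
          * Real.exp (-(j : ℝ) * (β / T))
        = ∑ p, ∑ j ∈ univ.filter (fun j : Fin T => cond j p),
            Real.exp (-(j : ℝ) * (β / T)) := by
      have : ∀ j : Fin T, ((univ.filter (fun p => cond j p)).card : ℝ)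
            * Real.exp (-(j : ℝ) * (β / T))
          = ∑ p ∈ univ.filter (fun p => cond j p), Real.exp (-(j : ℝ) * (β / T)) := by
        intro j; rw [Finset.sum_const, nsmul_eq_mul]
      simp_rw [this, Finset.sum_filter]
      exact Finset.sum_comm
    rw [hswap, Finset.mul_sum]
    exact Finset.sum_le_sum (fun p _ => inner p)
  constructor
  · calc (1 - δ) * (∑ p, Real.exp (-β * E p))
        ≤ (1 - δ) * ∑ j : Fin T, ((univ.filter (fun p => kf p = j)).card : ℝ)
            * Real.exp (-(j : ℝ) * (β / T)) :=
          mul_le_mul_of_nonneg_left key1 (by linarith)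
      _ = ∑ j : Fin T, ((1 - δ) * ((univ.filter (fun p => kf p = j)).card : ℝ))
            * Real.exp (-(j : ℝ) * (β / T)) := by
          rw [Finset.mul_sum]; apply Finset.sum_congr rfl; intros; ring
      _ ≤ ∑ j : Fin T, Mt j * Real.exp (-(j : ℝ) * (β / T)) := by
          apply Finset.sum_le_sum
          intro j _
          apply mul_le_mul_of_nonneg_right _ (Real.exp_pos _).le
          have := hMlo j
          rw [hcardA j] at this
          exact this
  · calc ∑ j : Fin T, Mt j * Real.exp (-(j : ℝ) * (β / T))
        ≤ ∑ j : Fin T, ((1 + δ) * ((univ.filter (fun p => cond j p)).card : ℝ))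
            * Real.exp (-(j : ℝ) * (β / T)) := by
          apply Finset.sum_le_sum
          intro j _
          apply mul_le_mul_of_nonneg_right _ (Real.exp_pos _).le
          have := hMhi j
          rw [hcardB j] at this
          exact this
      _ = (1 + δ) * ∑ j : Fin T, ((univ.filter (fun p => cond j p)).card : ℝ)
            * Real.exp (-(j : ℝ) * (β / T)) := by
          rw [Finset.mul_sum]; apply Finset.sum_congr rfl; intros; ring
      _ ≤ (1 + δ) * ((1 + Real.exp (β / T) + Real.exp (2 * (β / T)))
            * ∑ p, Real.exp (-β * E p)) :=
          mul_le_mul_of_nonneg_left key2 (by linarith)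
      _ = (1 + δ) * (1 + Real.exp (β / T) + Real.exp (2 * (β / T)))
            * ∑ p, Real.exp (-β * E p) := by ring
end

section
/- For all real numbers θ and θ̃ and every real N > 0, setting M = N·sin²(θ/2) and Δθ = |θ̃ − θ|, it holds that |N·sin²(θ̃/2) − M| ≤ (√(2NM) + N·Δθ/2)·Δθ. -/
lemma abs_sin_le_abs' (x : ℝ) : |Real.sin x| ≤ |x| := Real.abs_sin_le_abs

lemma sin_lip (x y : ℝ) : |Real.sin x - Real.sin y| ≤ |x - y| := by
  rw [Real.sin_sub_sin, abs_mul, abs_mul, abs_two]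
  have h1 : |Real.sin ((x - y) / 2)| ≤ |x - y| / 2 := by
    have := Real.abs_sin_le_abs (x := (x - y) / 2)
    rwa [abs_div, abs_two] at this
  have h2 := Real.abs_cos_le_one ((x + y) / 2)
  nlinarith [abs_nonneg (Real.sin ((x - y) / 2)), abs_nonneg (Real.cos ((x + y) / 2))]

/-- Accuracy of amplitude (quantum counting) estimation: for reals `θ, θ̃` and
`N > 0`, with `M = N·sin²(θ/2)` and `Δθ = |θ̃ − θ|`,
`|N·sin²(θ̃/2) − M| ≤ (√(2NM) + N·Δθ/2)·Δθ`. -/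
theorem quantum_counting_error (θ θt N : ℝ) (hN : 0 < N) :
    |N * Real.sin (θt / 2) ^ 2 - N * Real.sin (θ / 2) ^ 2|
      ≤ (Real.sqrt (2 * N * (N * Real.sin (θ / 2) ^ 2)) + N * |θt - θ| / 2) * |θt - θ| := by
  set a := θt / 2
  set b := θ / 2
  set s := |Real.sin b| with hs
  set d := |θt - θ| with hd
  have hd0 : 0 ≤ d := abs_nonneg _
  have hs0 : 0 ≤ s := abs_nonneg _
  -- identity
  have hid : Real.sin a ^ 2 - Real.sin b ^ 2 = Real.sin (a + b) * Real.sin (a - b) := by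
    rw [Real.sin_add, Real.sin_sub]
    have h1 := Real.sin_sq_add_cos_sq a
    have h2 := Real.sin_sq_add_cos_sq b
    nlinarith [h1, h2]
  have hab : |a - b| = d / 2 := by
    rw [hd]
    have : a - b = (θt - θ) / 2 := by rw [show a = θt/2 from rfl, show b = θ/2 from rfl]; ring
    rw [this, abs_div]
    norm_num
  have h1 : |Real.sin (a - b)| ≤ d / 2 := (abs_sin_le_abs' _).trans (le_of_eq hab)
  have h2b : |Real.sin (2 * b)| ≤ 2 * s := by
    rw [hs, Real.sin_two_mul, abs_mul, abs_mul, abs_two]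
    have := Real.abs_cos_le_one b
    nlinarith [abs_nonneg (Real.sin b)]
  have h2 : |Real.sin (a + b)| ≤ 2 * s + d / 2 := by
    have hl : |Real.sin (a + b) - Real.sin (2 * b)| ≤ d / 2 := by
      have : |(a + b) - 2 * b| = d / 2 := by
        rw [show (a + b) - 2*b = a - b by ring]; exact hab
      exact (sin_lip _ _).trans (le_of_eq this)
    calc |Real.sin (a + b)| ≤ |Real.sin (2*b)| + |Real.sin (a+b) - Real.sin (2*b)| := by
          have := abs_add_le (Real.sin (2*b)) (Real.sin (a+b) - Real.sin (2*b))
          simpa using this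
      _ ≤ 2 * s + d / 2 := add_le_add h2b hl
  have hsqrt : N * s ≤ Real.sqrt (2 * N * (N * Real.sin b ^ 2)) := by
    rw [show 2 * N * (N * Real.sin b ^ 2) = (N * s)^2 + (N*s)^2 by
      rw [hs, mul_pow, sq_abs]; ring]
    have h := Real.sqrt_le_sqrt (show (N*s)^2 ≤ (N*s)^2 + (N*s)^2 by nlinarith [sq_nonneg (N*s)])
    calc N * s = Real.sqrt ((N*s)^2) := (Real.sqrt_sq (by positivity)).symm
      _ ≤ _ := h
  have key : |N * Real.sin a ^ 2 - N * Real.sin b ^ 2| ≤ N * ((2 * s + d / 2) * (d / 2)) := by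
    rw [show N * Real.sin a ^ 2 - N * Real.sin b ^ 2 = N * (Real.sin a ^2 - Real.sin b ^2) by ring,
      abs_mul, abs_of_pos hN, hid, abs_mul]
    have := mul_le_mul h2 h1 (abs_nonneg _) (by positivity)
    nlinarith
  have hfin : N * ((2 * s + d / 2) * (d / 2)) ≤
      (Real.sqrt (2 * N * (N * Real.sin b ^ 2)) + N * d / 2) * d := by
    nlinarith [mul_le_mul_of_nonneg_right hsqrt hd0, mul_nonneg hN.le (sq_nonneg d), sq_nonneg d]
  exact key.trans hfin
end

section
/- Let n, d be natural numbers with 1 ≤ d ≤ n. On the n-qubit space ℂ^{2^n} with computational basis vectors e_w indexed by bit strings w ∈ {0,1}^n, define H_stab := Σ_{S ⊆ {1,…,n}, |S|=d+1} P_S + (1/C(n,d))·Σ_{S ⊆ {1,…,n}, |S|=d} (I − P_S) − ((C(n,d)−1)/C(n,d))·I, where P_S is the diagonal orthogonal projection onto the span of basis states e_w with w_i = 1 for all i ∈ S. Then H_stab is positive semidefinite, its kernel is exactly the span of the basis states e_w with Hamming weight exactly d, and for every unit vector φ orthogonal to that span one has ⟨φ, H_stab φ⟩ ≥ 1/C(n,d).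 -/
open scoped ComplexOrder

/-- The diagonal orthogonal projection (as a matrix on the `n`-qubit space, with
basis indexed by bit strings `w : Fin n → Bool`) onto the span of basis states
whose bits are `1` on every index of `S`. -/
noncomputable def qubitOnesProj (n : ℕ) (S : Finset (Fin n)) :
    Matrix (Fin n → Bool) (Fin n → Bool) ℂ :=
  Matrix.diagonal fun w => if ∀ i ∈ S, w i = true then 1 else 0

/-- The clock-stabilizer Hamiltonian
`H_stab = Σ_{|S|=d+1} P_S + (1/C(n,d)) Σ_{|S|=d} (I − P_S) − ((C(n,d)−1)/C(n,d)) I`. -/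
noncomputable def Hstab (n d : ℕ) : Matrix (Fin n → Bool) (Fin n → Bool) ℂ :=
  (∑ S ∈ (Finset.univ : Finset (Fin n)).powersetCard (d + 1), qubitOnesProj n S)
    + ((n.choose d : ℂ))⁻¹ •
        (∑ S ∈ (Finset.univ : Finset (Fin n)).powersetCard d, (1 - qubitOnesProj n S))
    - (((n.choose d : ℂ) - 1) / (n.choose d : ℂ)) • 1

-- Hamming weight
def wt {n : ℕ} (w : Fin n → Bool) : ℕ := (Finset.univ.filter fun i => w i = true).card

-- real diagonal value
noncomputable def fval (n d k : ℕ) : ℝ :=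
  (k.choose (d+1) : ℝ) + (1 - (k.choose d : ℝ)) / (n.choose d : ℝ)

lemma sum_proj {n : ℕ} (m : ℕ) (w : Fin n → Bool) :
    ∑ S ∈ (Finset.univ : Finset (Fin n)).powersetCard m,
      (if ∀ i ∈ S, w i = true then (1:ℂ) else 0)
    = ((wt w).choose m : ℂ) := by
  classical
  rw [Finset.sum_boole]
  congr 1
  have : ((Finset.univ : Finset (Fin n)).powersetCard m).filter
      (fun S => ∀ i ∈ S, w i = true)
      = (Finset.univ.filter fun i => w i = true).powersetCard m := by
    ext S
    simp [Finset.mem_powersetCard, Finset.mem_filter, Finset.subset_iff]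
    tauto
  rw [this, Finset.card_powersetCard, wt]

lemma Hstab_diag (n d : ℕ) (hdn : d ≤ n) :
    Hstab n d = Matrix.diagonal (fun w => ((fval n d (wt w) : ℝ) : ℂ)) := by
  classical
  have hN : ((n.choose d : ℝ)) ≠ 0 := by
    exact_mod_cast (Nat.choose_pos hdn).ne'
  have hNc : ((n.choose d : ℂ)) ≠ 0 := by exact_mod_cast (Nat.choose_pos hdn).ne'
  ext w w'
  by_cases h : w = w'
  · subst h
    simp only [Hstab, qubitOnesProj, Matrix.sub_apply, Matrix.add_apply,
      Matrix.smul_apply, Matrix.sum_apply, Matrix.diagonal_apply_eq,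
      Matrix.one_apply_eq, Matrix.sub_apply, smul_eq_mul]
    rw [Finset.sum_sub_distrib]
    rw [sum_proj, sum_proj]
    simp only [Finset.sum_const, Finset.card_powersetCard, Finset.card_univ,
      Fintype.card_fin, nsmul_eq_mul, mul_one]
    rw [fval]
    push_cast
    field_simp
    ring
  · simp only [Hstab, qubitOnesProj, Matrix.sub_apply, Matrix.add_apply,
      Matrix.smul_apply, Matrix.sum_apply, Matrix.diagonal_apply_ne _ h,
      Matrix.one_apply_ne h, smul_eq_mul]
    simp [Matrix.diagonal_apply_ne _ h, Matrix.one_apply_ne h]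

lemma fval_eq_zero (n d : ℕ) (hdn : d ≤ n) : fval n d d = 0 := by
  have hN : ((n.choose d : ℝ)) ≠ 0 := by
    exact_mod_cast (Nat.choose_pos hdn).ne'
  simp [fval, Nat.choose_eq_zero_of_lt (Nat.lt_succ_self d), Nat.choose_self]

lemma fval_ge (n d k : ℕ) (hdn : d ≤ n) (hk : k ≤ n) (hkd : k ≠ d) :
    1 / (n.choose d : ℝ) ≤ fval n d k := by
  have hN0 : (0:ℝ) < (n.choose d : ℝ) := by exact_mod_cast Nat.choose_pos hdn
  rcases lt_or_gt_of_ne hkd with h | h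
  · rw [fval, Nat.choose_eq_zero_of_lt h, Nat.choose_eq_zero_of_lt (h.trans (Nat.lt_succ_self d))]
    simp
  · have h1 : 1 ≤ (k.choose (d+1) : ℝ) := by
      exact_mod_cast Nat.succ_le_of_lt (Nat.choose_pos h)
    have h2 : (k.choose d : ℝ) ≤ (n.choose d : ℝ) := by
      exact_mod_cast Nat.choose_le_choose d hk
    have h3 : (1 - (n.choose d:ℝ))/(n.choose d:ℝ) ≤ (1 - (k.choose d:ℝ))/(n.choose d:ℝ) := by
      gcongr
    have h4 : 1 + (1 - (n.choose d:ℝ))/(n.choose d:ℝ) = 1/(n.choose d:ℝ) := by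
      field_simp
      ring
    rw [fval]
    linarith

lemma fval_nonneg (n d k : ℕ) (hdn : d ≤ n) (hk : k ≤ n) : 0 ≤ fval n d k := by
  have hN0 : (0:ℝ) < (n.choose d : ℝ) := by exact_mod_cast Nat.choose_pos hdn
  by_cases h : k = d
  · rw [h]; exact (fval_eq_zero n d hdn).ge
  · exact le_trans (by positivity) (fval_ge n d k hdn hk h)

lemma wt_le {n : ℕ} (w : Fin n → Bool) : wt w ≤ n := by
  simpa [wt] using (Finset.card_filter_le Finset.univ fun i => w i = true)

lemma Hstab_apply (n d : ℕ) (hdn : d ≤ n) (φ : EuclideanSpace ℂ (Fin n → Bool))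
    (w : Fin n → Bool) :
    (Matrix.toEuclideanLin (Hstab n d)) φ w = ((fval n d (wt w) : ℝ) : ℂ) * φ w := by
  rw [Hstab_diag n d hdn]
  simp [Matrix.toEuclideanLin_apply, Matrix.mulVec_diagonal]


/-- `H_stab` is positive semidefinite, its kernel is exactly the span of the
computational basis states of Hamming weight `d`, and every unit vector
orthogonal to that span has energy at least `1/C(n,d)`. -/
theorem Hstab_spectrum (n d : ℕ) (hd : 1 ≤ d) (hdn : d ≤ n) :
    (Hstab n d).PosSemidef ∧
    LinearMap.ker (Matrix.toEuclideanLin (Hstab n d))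
      = Submodule.span ℂ {v : EuclideanSpace ℂ (Fin n → Bool) |
          ∃ w : Fin n → Bool,
            (Finset.univ.filter fun i => w i = true).card = d ∧
            v = EuclideanSpace.single w 1} ∧
    ∀ φ : EuclideanSpace ℂ (Fin n → Bool), ‖φ‖ = 1 →
      φ ∈ (Submodule.span ℂ {v : EuclideanSpace ℂ (Fin n → Bool) |
          ∃ w : Fin n → Bool,
            (Finset.univ.filter fun i => w i = true).card = d ∧
            v = EuclideanSpace.single w 1})ᗮ →
      (1 : ℝ) / (n.choose d : ℝ)
        ≤ (inner ℂ φ ((Matrix.toEuclideanLin (Hstab n d)) φ) : ℂ).re := by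
  classical
  have hN0 : (0:ℝ) < (n.choose d : ℝ) := by exact_mod_cast Nat.choose_pos hdn
  have hwtd : ∀ w : Fin n → Bool,
      (Finset.univ.filter fun i => w i = true).card = wt w := fun _ => rfl
  have hzero : ∀ w : Fin n → Bool, wt w = d → fval n d (wt w) = 0 := by
    intro w h; rw [h]; exact fval_eq_zero n d hdn
  have hge : ∀ w : Fin n → Bool, wt w ≠ d →
      1 / (n.choose d : ℝ) ≤ fval n d (wt w) :=
    fun w h => fval_ge n d _ hdn (wt_le w) h
  have hpos : ∀ w : Fin n → Bool, wt w ≠ d → fval n d (wt w) ≠ 0 :=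
    fun w h => ne_of_gt (lt_of_lt_of_le (by positivity) (hge w h))
  refine ⟨?_, ?_, ?_⟩
  · rw [Hstab_diag n d hdn]
    refine Matrix.posSemidef_diagonal_iff.mpr fun w => ?_
    rw [Complex.zero_le_real]
    by_cases h : wt w = d
    · exact (hzero w h).ge
    · exact le_trans (by positivity) (hge w h)
  · apply le_antisymm
    · intro φ hφ
      have hv : ∀ w, ((fval n d (wt w) : ℝ) : ℂ) * φ w = 0 := by
        intro w
        rw [← Hstab_apply n d hdn, LinearMap.mem_ker.mp hφ]
        rfl
      have hφ0 : ∀ w, wt w ≠ d → φ w = 0 := by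
        intro w h
        have := hv w
        rcases mul_eq_zero.mp this with h' | h'
        · exact absurd (Complex.ofReal_eq_zero.mp h') (hpos w h)
        · exact h'
      have hrep : φ = ∑ w ∈ Finset.univ.filter (fun w : Fin n → Bool => wt w = d),
          φ w • EuclideanSpace.single w (1:ℂ) := by
        ext w'
        rw [WithLp.ofLp_sum, Finset.sum_apply]
        simp only [PiLp.smul_apply, EuclideanSpace.single_apply, smul_eq_mul,
          mul_ite, mul_one, mul_zero]
        rw [Finset.sum_ite_eq _ w' (fun w => φ w)]
        by_cases h : wt w' = d
        · simp [h]
        · simp [h, hφ0 w' h]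
      rw [hrep]
      refine Submodule.sum_mem _ fun w hw => Submodule.smul_mem _ _ ?_
      refine Submodule.subset_span ⟨w, ?_, rfl⟩
      rw [hwtd w]
      exact (Finset.mem_filter.mp hw).2
    · rw [Submodule.span_le]
      rintro v ⟨w, hwd, rfl⟩
      rw [SetLike.mem_coe, LinearMap.mem_ker]
      ext w'
      rw [Hstab_apply n d hdn]
      simp only [EuclideanSpace.single_apply]
      by_cases h : w' = w
      · subst h
        rw [hwtd] at hwd
        simp [hzero w' hwd]
      · simp [h]
  · intro φ hnorm hperp
    have hφ0 : ∀ w, wt w = d → φ w = 0 := by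
      intro w hw
      have hmem : EuclideanSpace.single w (1:ℂ) ∈ Submodule.span ℂ
          {v : EuclideanSpace ℂ (Fin n → Bool) | ∃ w : Fin n → Bool,
            (Finset.univ.filter fun i => w i = true).card = d ∧
            v = EuclideanSpace.single w 1} :=
        Submodule.subset_span ⟨w, by rw [hwtd]; exact hw, rfl⟩
      have := (Submodule.mem_orthogonal _ φ).mp hperp _ hmem
      rwa [EuclideanSpace.inner_single_left, map_one, one_mul] at this
    have hinner : (inner ℂ φ ((Matrix.toEuclideanLin (Hstab n d)) φ) : ℂ)
        = ∑ w, ((fval n d (wt w) * ‖φ w‖^2 : ℝ) : ℂ) := by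
      rw [PiLp.inner_apply]
      refine Finset.sum_congr rfl fun w _ => ?_
      rw [Hstab_apply n d hdn]
      simp only [RCLike.inner_apply]
      rw [mul_assoc, Complex.mul_conj]
      simp [Complex.ofReal_mul, Complex.normSq_eq_norm_sq]
    rw [hinner, ← Complex.ofReal_sum, Complex.ofReal_re]
    have hsum : ∑ w, ‖φ w‖^2 = 1 := by
      have := EuclideanSpace.norm_eq φ
      rw [hnorm] at this
      have h2 : Real.sqrt (∑ w, ‖φ w‖^2) = 1 := this.symm
      have := Real.sqrt_eq_one.mp h2
      simpa using this
    calc (1:ℝ) / (n.choose d : ℝ) = ∑ w, (1 / (n.choose d : ℝ)) * ‖φ w‖^2 := by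
          rw [← Finset.mul_sum, hsum, mul_one]
      _ ≤ ∑ w, fval n d (wt w) * ‖φ w‖^2 := by
          refine Finset.sum_le_sum fun w _ => ?_
          by_cases h : wt w = d
          · simp [hφ0 w h]
          · exact mul_le_mul_of_nonneg_right (hge w h) (by positivity)
end

section
/- (Grover reflection spectrum) Let V be a finite-dimensional complex inner product space, let v ∈ V be a unit vector, and let Π be an orthogonal projection on V with Πv ≠ 0 and v − Πv ≠ 0. Let θ ∈ (0, π) be the angle with sin(θ/2) = ‖v − Πv‖. Then the operator R := (2·v v* − I)(2Π − I) maps the two-dimensional subspace W := span{Πv, v − Πv} to itself, and the restriction of R to W has eigenvalues e^{iθ} and e^{−iθ}. -/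
/-- **Grover reflection spectrum.** Let `v` be a unit vector in a
finite-dimensional complex inner ℂ product space, `Π` an orthogonal projection
(idempotent and symmetric) with `Πv ≠ 0` and `v − Πv ≠ 0`, and `θ ∈ (0,π)` with
`sin(θ/2) = ‖v − Πv‖`.  Then `R = (2vv* − I)(2Π − I)` maps
`W = span{Πv, v − Πv}` to itself, and the restriction of `R` to `W` has
eigenvalues `e^{iθ}` and `e^{−iθ}` (witnessed by nonzero eigenvectors in `W`). -/
theorem grover_reflection_spectrum {V : Type*} [NormedAddCommGroup V]
    [InnerProductSpace ℂ V] [FiniteDimensional ℂ V]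
    (v : V) (hv : ‖v‖ = 1)
    (Pi : V →ₗ[ℂ] V) (hidem : Pi.comp Pi = Pi)
    (hsym : ∀ x y : V, (inner ℂ (Pi x) y : ℂ) = inner ℂ x (Pi y))
    (hPv : Pi v ≠ 0) (hQv : v - Pi v ≠ 0)
    (θ : ℝ) (hθ0 : 0 < θ) (hθπ : θ < Real.pi)
    (hθ : Real.sin (θ / 2) = ‖v - Pi v‖)
    (Pv : V →ₗ[ℂ] V) (hPvdef : ∀ w : V, Pv w = (inner ℂ v w : ℂ) • v) :
    (∀ w ∈ Submodule.span ℂ {Pi v, v - Pi v},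
        ((2 • Pv - LinearMap.id).comp (2 • Pi - LinearMap.id)) w
          ∈ Submodule.span ℂ {Pi v, v - Pi v}) ∧
    (∃ w₁ ∈ Submodule.span ℂ {Pi v, v - Pi v}, w₁ ≠ 0 ∧
        ((2 • Pv - LinearMap.id).comp (2 • Pi - LinearMap.id)) w₁
          = Complex.exp (θ * Complex.I) • w₁) ∧
    (∃ w₂ ∈ Submodule.span ℂ {Pi v, v - Pi v}, w₂ ≠ 0 ∧
        ((2 • Pv - LinearMap.id).comp (2 • Pi - LinearMap.id)) w₂
          = Complex.exp (-θ * Complex.I) • w₂) := by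
  set R := (2 • Pv - LinearMap.id).comp (2 • Pi - LinearMap.id) with hR
  set a := Pi v with ha
  set b := v - Pi v with hb
  set s := ‖b‖ with hs
  set c := ‖a‖ with hc
  have hv_ab : v = a + b := by rw [ha, hb]; abel
  have hPia : Pi a = a := by
    conv_lhs => rw [ha, ← LinearMap.comp_apply, hidem]
  have hPib : Pi b = 0 := by rw [hb, map_sub, hPia]; simp [ha]
  have hab : (inner ℂ a b : ℂ) = 0 := by
    rw [ha, hsym v b, hPib, inner_zero_right]
  have hba : (inner ℂ b a : ℂ) = 0 := by
    rw [← inner_conj_symm, hab, map_zero]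
  have haa : (inner ℂ a a : ℂ) = (c : ℂ)^2 := by
    rw [inner_self_eq_norm_sq_to_K]; rfl
  have hbb : (inner ℂ b b : ℂ) = (s : ℂ)^2 := by
    rw [inner_self_eq_norm_sq_to_K]; rfl
  have hva : (inner ℂ v a : ℂ) = (c : ℂ)^2 := by
    nth_rewrite 1 [hv_ab]
    rw [inner_add_left, hba, haa, add_zero]
  have hvb : (inner ℂ v b : ℂ) = (s : ℂ)^2 := by
    nth_rewrite 1 [hv_ab]
    rw [inner_add_left, hab, hbb, zero_add]
  have hsc : (c : ℂ)^2 + (s : ℂ)^2 = 1 := by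
    have h1 : (inner ℂ v v : ℂ) = 1 := by
      rw [inner_self_eq_norm_sq_to_K, hv]; norm_num
    nth_rewrite 2 [hv_ab] at h1
    rw [inner_add_right, hva, hvb] at h1
    exact h1
  have hscR : c^2 + s^2 = 1 := by exact_mod_cast hsc
  have hcpos : 0 < c := norm_pos_iff.mpr hPv
  have hspos : 0 < s := norm_pos_iff.mpr hQv
  have hcθ : c = Real.cos (θ/2) := by
    have h1 : Real.cos (θ/2) ≥ 0 :=
      Real.cos_nonneg_of_mem_Icc ⟨by linarith, by linarith⟩
    have h2 : c^2 = Real.cos (θ/2)^2 := by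
      have := Real.sin_sq_add_cos_sq (θ/2)
      rw [hθ] at this
      nlinarith
    nlinarith
  have hcos : (Real.cos θ : ℂ) = 2*(c:ℂ)^2 - 1 := by
    have : Real.cos θ = 2*c^2 - 1 := by
      rw [show θ = 2*(θ/2) by ring, Real.cos_two_mul, ← hcθ]
    rw [this]; push_cast; ring
  have hsin : (Real.sin θ : ℂ) = 2*(s:ℂ)*(c:ℂ) := by
    have : Real.sin θ = 2*s*c := by
      rw [show θ = 2*(θ/2) by ring, Real.sin_two_mul, hθ, ← hcθ]
    rw [this]; push_cast; ring
  -- action of R on a and b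
  have hRapp : ∀ w : V, R w = (2 * (inner ℂ v (2 • Pi w - w) : ℂ)) • v - (2 • Pi w - w) := by
    intro w
    simp only [hR, LinearMap.comp_apply, LinearMap.sub_apply, LinearMap.smul_apply,
      LinearMap.id_apply, hPvdef]
    module
  have hRa : R a = ((2*(c:ℂ)^2-1)) • a + ((2*(c:ℂ)^2)) • b := by
    rw [hRapp, hPia]
    rw [show (2:ℕ) • a - a = a by rw [two_smul]; abel, hva, hv_ab]
    module
  have hRb : R b = ((-(2*(s:ℂ)^2))) • a + ((1-2*(s:ℂ)^2)) • b := by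
    rw [hRapp, hPib]
    rw [show (2:ℕ) • (0:V) - b = -b by simp]
    rw [inner_neg_right, hvb, hv_ab]
    module
  have hmema : a ∈ Submodule.span ℂ {a, b} :=
    Submodule.subset_span (by left; rfl)
  have hmemb : b ∈ Submodule.span ℂ {a, b} :=
    Submodule.subset_span (by right; rfl)
  have hRmem : ∀ w ∈ Submodule.span ℂ {a, b}, R w ∈ Submodule.span ℂ {a, b} := by
    intro w hw
    induction hw using Submodule.span_induction with
    | mem x hx =>
      rcases hx with rfl | rfl
      · rw [hRa]; exact Submodule.add_mem _ (Submodule.smul_mem _ _ hmema) (Submodule.smul_mem _ _ hmemb)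
      · rw [hRb]; exact Submodule.add_mem _ (Submodule.smul_mem _ _ hmema) (Submodule.smul_mem _ _ hmemb)
    | zero => simp
    | add x y hx hy ihx ihy => rw [map_add]; exact Submodule.add_mem _ ihx ihy
    | smul t x hx ihx => rw [map_smul]; exact Submodule.smul_mem _ _ ihx
  refine ⟨hRmem, ?_, ?_⟩
  · refine ⟨(s:ℂ) • a - ((c:ℂ)*Complex.I) • b, ?_, ?_, ?_⟩
    · exact Submodule.sub_mem _ (Submodule.smul_mem _ _ hmema) (Submodule.smul_mem _ _ hmemb)
    · intro h
      have h2 : (inner ℂ a ((s:ℂ) • a - ((c:ℂ)*Complex.I) • b) : ℂ) = (s:ℂ)*(c:ℂ)^2 := by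
        rw [inner_sub_right, inner_smul_right, inner_smul_right, haa, hab]; ring
      rw [h, inner_zero_right] at h2
      have : (s:ℂ)*(c:ℂ)^2 ≠ 0 := by
        exact mul_ne_zero (Complex.ofReal_ne_zero.mpr hspos.ne')
          (pow_ne_zero 2 (Complex.ofReal_ne_zero.mpr hcpos.ne'))
      exact this h2.symm
    · rw [map_sub, map_smul, map_smul, hRa, hRb, Complex.exp_mul_I]
      rw [← Complex.ofReal_cos, ← Complex.ofReal_sin, hcos, hsin]
      match_scalars
      · linear_combination (-2*(s:ℂ)*(c:ℂ)^2) * Complex.I_sq + (-2*(c:ℂ)*Complex.I) * hsc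
      · linear_combination (2*(s:ℂ)*(c:ℂ)^2) * Complex.I_sq + (2*(c:ℂ)*Complex.I) * hsc
  · refine ⟨(s:ℂ) • a + ((c:ℂ)*Complex.I) • b, ?_, ?_, ?_⟩
    · exact Submodule.add_mem _ (Submodule.smul_mem _ _ hmema) (Submodule.smul_mem _ _ hmemb)
    · intro h
      have h2 : (inner ℂ a ((s:ℂ) • a + ((c:ℂ)*Complex.I) • b) : ℂ) = (s:ℂ)*(c:ℂ)^2 := by
        rw [inner_add_right, inner_smul_right, inner_smul_right, haa, hab]; ring
      rw [h, inner_zero_right] at h2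
      have : (s:ℂ)*(c:ℂ)^2 ≠ 0 := by
        exact mul_ne_zero (Complex.ofReal_ne_zero.mpr hspos.ne')
          (pow_ne_zero 2 (Complex.ofReal_ne_zero.mpr hcpos.ne'))
      exact this h2.symm
    · rw [map_add, map_smul, map_smul, hRa, hRb]
      have hexp2 : Complex.exp (-↑θ * Complex.I) = (Real.cos θ : ℂ) - (Real.sin θ : ℂ) * Complex.I := by
        rw [show (-↑θ * Complex.I : ℂ) = ↑(-θ:ℝ) * Complex.I by push_cast; ring,
          Complex.exp_mul_I, ← Complex.ofReal_cos, ← Complex.ofReal_sin,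
          Real.cos_neg, Real.sin_neg]
        push_cast
        ring
      rw [hexp2, hcos, hsin]
      match_scalars
      · linear_combination (-2*(s:ℂ)*(c:ℂ)^2) * Complex.I_sq + (2*(c:ℂ)*Complex.I) * hsc
      · linear_combination (2*(s:ℂ)*(c:ℂ)^2) * Complex.I_sq + (-2*(c:ℂ)*Complex.I) * hsc
end

section
/- For every real number x with 0 ≤ x ≤ 1/8, it holds that (1 + x)·(1 + e^{x} + e^{2x}) ≤ 3 + 7x. -/
lemma exp_cubic_bound (t : ℝ) (h0 : 0 ≤ t) (h1 : t ≤ 1/4) :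
    Real.exp t ≤ 1 + t + t^2/2 + (2/9) * t^3 := by
  have ht : |t| ≤ 1 := by rw [abs_of_nonneg h0]; linarith
  have := Real.exp_bound ht (n := 3) (by norm_num)
  have hsum : ∑ i ∈ Finset.range 3, t ^ i / (Nat.factorial i : ℝ) = 1 + t + t^2/2 := by
    simp [Finset.sum_range_succ, Nat.factorial]
  rw [hsum] at this
  have habs : |t| ^ 3 = t ^ 3 := by rw [abs_of_nonneg h0]
  rw [habs] at this
  have := abs_le.mp this
  have h2 : Real.exp t - (1 + t + t^2/2) ≤ t ^ 3 * ((3:ℕ).succ / ((Nat.factorial 3 : ℝ) * 3)) := this.2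
  norm_num [Nat.factorial] at h2
  nlinarith [h2]

/-- For every real `x` with `0 ≤ x ≤ 1/8`, `(1 + x)·(1 + e^x + e^{2x}) ≤ 3 + 7x`. -/
theorem partition_error_calibration (x : ℝ) (h0 : 0 ≤ x) (h1 : x ≤ 1/8) :
    (1 + x) * (1 + Real.exp x + Real.exp (2 * x)) ≤ 3 + 7 * x := by
  have e1 := exp_cubic_bound x h0 (by linarith)
  have e2 := exp_cubic_bound (2*x) (by linarith) (by linarith)
  nlinarith [Real.exp_pos x, Real.exp_pos (2*x), sq_nonneg x, pow_nonneg h0 3]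
end
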